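/- First-derivative test for oscillatory integrals: if A : [a,b] → ℂ is C¹ with |A(x)| ≤ A₀ and |A'(x)| ≤ A₀/A₁ on [a,b], A(a) = A(b) = 0, and B : [a,b] → ℝ is C² with |B'(x)| ≥ B₁ > 0 and |B''(x)| ≤ B₂ on [a,b], then |∫_a^b A(x) e^{2πi B(x)} dx| ≤ (1/(2π)) · (b−a) · (A₀/(A₁B₁) + A₀B₂/B₁²). -/

import Mathlib

open Real MeasureTheory

theorem stmt4 (a b A₀ A₁ B₁ B₂ : ℝ) (hab : a ≤ b) (hA₀ : 0 < A₀) (hA₁ : 0 < A₁)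
    (hB₁ : 0 < B₁) (hB₂ : 0 < B₂) (A : ℝ → ℂ) (B : ℝ → ℝ)
    (hA : ContDiff ℝ 1 A) (hB : ContDiff ℝ 2 B)
    (hAbd : ∀ x ∈ Set.Icc a b, ‖A x‖ ≤ A₀)
    (hA'bd : ∀ x ∈ Set.Icc a b, ‖deriv A x‖ ≤ A₀ / A₁)
    (hAa : A a = 0) (hAb : A b = 0)
    (hB' : ∀ x ∈ Set.Icc a b, B₁ ≤ |deriv B x|)
    (hB'' : ∀ x ∈ Set.Icc a b, |deriv (deriv B) x| ≤ B₂) :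
    ‖∫ x in a..b, A x * Complex.exp (2*π*Complex.I * (B x : ℂ))‖ ≤
      (1/(2*π)) * (b - a) * (A₀/(A₁*B₁) + A₀*B₂/B₁^2) := by
  have hπ : (0:ℝ) < π := Real.pi_pos
  set c : ℂ := 2*π*Complex.I with hc_def
  have hc : c ≠ 0 := by
    simp [hc_def, Complex.ext_iff, pi_ne_zero]
  have hcnorm : ‖c‖ = 2*π := by
    rw [hc_def]
    simp [abs_of_pos hπ, mul_comm]
  have hAd : Differentiable ℝ A := hA.differentiable one_ne_zero
  have hA'c : Continuous (deriv A) := hA.continuous_deriv le_rfl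
  have hB2 : ContDiff ℝ (1+1) B := by norm_num; exact hB
  have hBd : Differentiable ℝ B := (contDiff_succ_iff_deriv.mp hB2).1
  have hB'cd : ContDiff ℝ 1 (deriv B) := (contDiff_succ_iff_deriv.mp hB2).2.2
  have hB'd : Differentiable ℝ (deriv B) := hB'cd.differentiable one_ne_zero
  have hB''c : Continuous (deriv (deriv B)) := hB'cd.continuous_deriv le_rfl
  have hB'ne : ∀ x ∈ Set.Icc a b, deriv B x ≠ 0 := by
    intro x hx
    have := hB' x hx
    intro h; rw [h] at this; simp at this; linarith
  have hden : ∀ x ∈ Set.Icc a b, (c * ((deriv B x : ℝ) : ℂ)) ≠ 0 := by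
    intro x hx
    exact mul_ne_zero hc (by exact_mod_cast hB'ne x hx)
  set φ : ℝ → ℂ := fun x => Complex.exp (c * (B x : ℂ)) with hφ_def
  have hφnorm : ∀ x, ‖φ x‖ = 1 := by
    intro x
    rw [hφ_def]
    simp only [Complex.norm_exp]
    have h0 : (c * (B x : ℂ)).re = 0 := by
      simp [hc_def]
    rw [h0, Real.exp_zero]
  have hφcont : Continuous φ := by
    apply Complex.continuous_exp.comp
    exact (continuous_const.mul (Complex.continuous_ofReal.comp hBd.continuous))
  set ψ : ℝ → ℂ := fun x => deriv A x / (c * ((deriv B x : ℝ) : ℂ))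
      - A x * ((deriv (deriv B) x : ℝ) : ℂ) / (c * (((deriv B x : ℝ) : ℂ))^2) with hψ_def
  -- derivative computation
  have key : ∀ x ∈ Set.uIcc a b,
      HasDerivAt (fun y => A y / (c * ((deriv B y : ℝ) : ℂ)) * φ y) (A x * φ x + ψ x * φ x) x := by
    intro x hx
    rw [Set.uIcc_of_le hab] at hx
    have h1 : HasDerivAt A (deriv A x) x := (hAd x).hasDerivAt
    have h2 : HasDerivAt (fun y => ((deriv B y : ℝ) : ℂ)) ((deriv (deriv B) x : ℝ) : ℂ) x :=
      ((hB'd x).hasDerivAt).ofReal_comp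
    have h2' : HasDerivAt (fun y => c * ((deriv B y : ℝ) : ℂ)) (c * ((deriv (deriv B) x : ℝ) : ℂ)) x :=
      h2.const_mul c
    have hg : HasDerivAt (fun y => A y / (c * ((deriv B y : ℝ) : ℂ)))
        ((deriv A x * (c * ((deriv B x : ℝ) : ℂ)) - A x * (c * ((deriv (deriv B) x : ℝ) : ℂ)))
          / (c * ((deriv B x : ℝ) : ℂ))^2) x := h1.div h2' (hden x hx)
    have hBx : HasDerivAt (fun y => ((B y : ℝ) : ℂ)) ((deriv B x : ℝ) : ℂ) x :=
      ((hBd x).hasDerivAt).ofReal_comp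
    have hφd : HasDerivAt φ (c * ((deriv B x : ℝ) : ℂ) * φ x) x := by
      have h := (hBx.const_mul c).cexp
      simpa [hφ_def, mul_comm, mul_assoc] using h
    have h := hg.mul hφd
    refine h.congr_deriv ?_
    have hb' : ((deriv B x : ℝ) : ℂ) ≠ 0 := by exact_mod_cast hB'ne x hx
    rw [hψ_def]
    field_simp
    ring
  -- integrability
  have hB'contc : Continuous (fun x => (c * ((deriv B x : ℝ) : ℂ))) :=
    continuous_const.mul (Complex.continuous_ofReal.comp (hB'd.continuous))
  have hψcont : ContinuousOn ψ (Set.Icc a b) := by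
    rw [hψ_def]
    apply ContinuousOn.sub
    · exact ContinuousOn.div hA'c.continuousOn hB'contc.continuousOn (fun x hx => hden x hx)
    · apply ContinuousOn.div
      · exact (hAd.continuous.mul (Complex.continuous_ofReal.comp hB''c)).continuousOn
      · exact (continuous_const.mul ((Complex.continuous_ofReal.comp hB'd.continuous).pow 2)).continuousOn
      · intro x hx
        refine mul_ne_zero hc (pow_ne_zero 2 ?_)
        exact_mod_cast hB'ne x hx
  have hAφ_int : IntervalIntegrable (fun x => A x * φ x) volume a b :=
    (hAd.continuous.mul hφcont).intervalIntegrable a b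
  have hψφ_int : IntervalIntegrable (fun x => ψ x * φ x) volume a b := by
    apply ContinuousOn.intervalIntegrable
    rw [Set.uIcc_of_le hab]
    exact hψcont.mul hφcont.continuousOn
  -- FTC
  have hsum_int : IntervalIntegrable (fun x => A x * φ x + ψ x * φ x) volume a b :=
    hAφ_int.add hψφ_int
  have hFTC : ∫ x in a..b, (A x * φ x + ψ x * φ x)
      = A b / (c * ((deriv B b : ℝ) : ℂ)) * φ b - A a / (c * ((deriv B a : ℝ) : ℂ)) * φ a :=
    intervalIntegral.integral_eq_sub_of_hasDerivAt key hsum_int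
  rw [hAa, hAb] at hFTC
  simp only [zero_div, zero_mul, sub_zero, sub_self] at hFTC
  rw [intervalIntegral.integral_add hAφ_int hψφ_int] at hFTC
  have heq : ∫ x in a..b, A x * φ x = -∫ x in a..b, ψ x * φ x :=
    eq_neg_of_add_eq_zero_left hFTC
  have hpt : ∀ x ∈ Set.uIoc a b, ‖ψ x * φ x‖ ≤ (1/(2*π)) * (A₀/(A₁*B₁) + A₀*B₂/B₁^2) := by
    intro x hx
    rw [Set.uIoc_of_le hab] at hx
    have hx' : x ∈ Set.Icc a b := Set.Ioc_subset_Icc_self hx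
    have hBx := hB' x hx'
    have hB''x := hB'' x hx'
    have hAx := hAbd x hx'
    have hA'x := hA'bd x hx'
    have hsq : B₁^2 ≤ (deriv B x)^2 := by nlinarith [sq_abs (deriv B x)]
    rw [norm_mul, hφnorm, mul_one]
    calc ‖ψ x‖ ≤ ‖deriv A x / (c * ((deriv B x : ℝ) : ℂ))‖
          + ‖A x * ((deriv (deriv B) x : ℝ) : ℂ) / (c * (((deriv B x : ℝ) : ℂ))^2)‖ :=
        norm_sub_le _ _
      _ = ‖deriv A x‖/(2*π*|deriv B x|) + ‖A x‖*|deriv (deriv B) x|/(2*π*(deriv B x)^2) := by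
        simp [norm_div, norm_mul, norm_pow, hcnorm, sq_abs]
      _ ≤ (A₀/A₁)/(2*π*B₁) + A₀*B₂/(2*π*B₁^2) := by
        gcongr
      _ = (1/(2*π)) * (A₀/(A₁*B₁) + A₀*B₂/B₁^2) := by
        field_simp
  calc ‖∫ x in a..b, A x * φ x‖ = ‖∫ x in a..b, ψ x * φ x‖ := by rw [heq, norm_neg]
    _ ≤ (1/(2*π)) * (A₀/(A₁*B₁) + A₀*B₂/B₁^2) * |b - a| :=
        intervalIntegral.norm_integral_le_of_norm_le_const hpt
    _ = (1/(2*π)) * (b - a) * (A₀/(A₁*B₁) + A₀*B₂/B₁^2) := by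
        rw [abs_of_nonneg (sub_nonneg.mpr hab)]; ring
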